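/- Let D be a simplicial triangulated 2-disc and let α be a path contained in the boundary ∂D that is a geodesic in the 1-skeleton of D. Then the sum over interior vertices v of α (vertices of α other than its endpoints) of the boundary curvatures κ_∂(v) = 3 − ∠(v) is at most 1. -/

import Mathlib

universe u

namespace ASC

variable {V : Type u} [DecidableEq V]

/-- Triangulated 2-discs, encoded inductively via shellings: a disc together with its
boundary cycle (recorded as a list of vertices, up to cyclic rotation) is either a single
2-simplex, or is obtained from a smaller disc by attaching a triangle along one boundary
edge (introducing a fresh vertex) or along two consecutive boundary edges. -/
inductive IsDiscWithBoundary : Finset (Finset V) → List V → Prop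
  | triangle (a b c : V) (hab : a ≠ b) (hac : a ≠ c) (hbc : b ≠ c) :
      IsDiscWithBoundary
        ({{a}, {b}, {c}, {a, b}, {a, c}, {b, c}, {a, b, c}} : Finset (Finset V)) [a, b, c]
  | rotate (F : Finset (Finset V)) (l₁ l₂ : List V) :
      IsDiscWithBoundary F (l₁ ++ l₂) → IsDiscWithBoundary F (l₂ ++ l₁)
  | glue_vertex (F : Finset (Finset V)) (a b d : V) (rest : List V) :
      IsDiscWithBoundary F (a :: b :: rest) →
      (∀ s ∈ F, d ∉ s) →
      IsDiscWithBoundary (F ∪ ({{d}, {a, d}, {b, d}, {a, b, d}} : Finset (Finset V)))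
        (a :: d :: b :: rest)
  | glue_edge (F : Finset (Finset V)) (a b c : V) (rest : List V) :
      IsDiscWithBoundary F (a :: b :: c :: rest) →
      rest ≠ [] → a ≠ c → ({a, c} : Finset V) ∉ F →
      IsDiscWithBoundary (F ∪ ({{a, c}, {a, b, c}} : Finset (Finset V))) (a :: c :: rest)

/-- The number of triangles of `F` containing the vertex `v`. -/
def angle (F : Finset (Finset V)) (v : V) : ℕ :=
  (F.filter fun s => s.card = 3 ∧ v ∈ s).card

/-- The vertex set of a finite complex. -/
def verts (F : Finset (Finset V)) : Finset V := F.sup id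

/-- The 1-skeleton of a finite complex. -/
def graphOf (F : Finset (Finset V)) : SimpleGraph V where
  Adj u v := u ≠ v ∧ ({u, v} : Finset V) ∈ F
  symm := by
    constructor
    intro u v h
    exact ⟨h.1.symm, by rw [Finset.pair_comm]; exact h.2⟩
  loopless := ⟨fun v h => h.1 rfl⟩

end ASC


set_option linter.unusedSectionVars false
set_option maxHeartbeats 1000000

namespace BGC
open ASC List

variable {V : Type u} [DecidableEq V]

open List

variable {V : Type u} [DecidableEq V]

lemma graphOf_adj {F : Finset (Finset V)} {u v : V} :
    (graphOf F).Adj u v ↔ u ≠ v ∧ ({u, v} : Finset V) ∈ F := Iff.rfl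

/-- `s` is a prefix of some rotation of `bd`. -/
def CPre (bd s : List V) : Prop := ∃ t, bd ~r (s ++ t)

lemma CPre.of_rot {bd bd' s : List V} (h : bd ~r bd') (h' : CPre bd' s) : CPre bd s := by
  obtain ⟨t, ht⟩ := h'
  exact ⟨t, h.trans ht⟩

lemma cpre_prefix {bd s : List V} (h : s <+: bd) : CPre bd s := by
  obtain ⟨t, rfl⟩ := h
  exact ⟨t, List.IsRotated.refl _⟩

lemma cpre_infix {bd s : List V} (h : s <:+: bd) : CPre bd s := by
  obtain ⟨l₁, l₂, rfl⟩ := h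
  refine ⟨l₂ ++ l₁, ?_⟩
  calc l₁ ++ s ++ l₂ = l₁ ++ (s ++ l₂) := by simp
    _ ~r (s ++ l₂) ++ l₁ := List.isRotated_append
    _ = s ++ (l₂ ++ l₁) := by simp

lemma cpre_wrap1 {bd m : List V} {p v q : V} (h : bd = v :: q :: m ++ [p]) :
    CPre bd [p, v, q] := by
  refine ⟨m, ?_⟩
  rw [h]
  calc v :: q :: m ++ [p] = (v :: q :: m) ++ [p] := by simp
    _ ~r [p] ++ (v :: q :: m) := List.isRotated_append
    _ = [p, v, q] ++ m := by simp

lemma cpre_wrap2 {bd m : List V} {p v q : V} (h : bd = q :: m ++ [p, v]) :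
    CPre bd [p, v, q] := by
  refine ⟨m, ?_⟩
  rw [h]
  calc q :: m ++ [p, v] = (q :: m) ++ [p, v] := by simp
    _ ~r [p, v] ++ (q :: m) := List.isRotated_append
    _ = [p, v, q] ++ m := by simp

lemma cpre_wrap1' {bd m : List V} {u v : V} (h : bd = v :: m ++ [u]) :
    CPre bd [u, v] := by
  refine ⟨m, ?_⟩
  rw [h]
  calc v :: m ++ [u] = (v :: m) ++ [u] := by simp
    _ ~r [u] ++ (v :: m) := List.isRotated_append
    _ = [u, v] ++ m := by simp

lemma isRotated_decomp {l l' : List V} (h : l ~r l') :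
    ∃ l₁ l₂, l = l₁ ++ l₂ ∧ l' = l₂ ++ l₁ := by
  obtain ⟨n, rfl⟩ := h
  rcases le_or_gt n l.length with hn | hn
  · exact ⟨l.take n, l.drop n, (List.take_append_drop n l).symm,
      List.rotate_eq_drop_append_take hn⟩
  · rcases Nat.eq_zero_or_pos l.length with h0 | h0
    · rw [List.length_eq_zero_iff] at h0
      subst h0
      exact ⟨[], [], by simp, by simp [List.rotate_nil]⟩
    · have h1 : n % l.length ≤ l.length := Nat.le_of_lt (Nat.mod_lt _ h0)
      refine ⟨l.take (n % l.length), l.drop (n % l.length),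
        (List.take_append_drop _ l).symm, ?_⟩
      rw [← List.rotate_mod, List.rotate_eq_drop_append_take h1]

lemma cyc2 {bd : List V} {u v : V} (h : CPre bd [u, v]) :
    [u, v] <:+: bd ∨ ∃ m, bd = v :: m ++ [u] := by
  obtain ⟨t, ht⟩ := h
  obtain ⟨l₁, l₂, hbd, hl⟩ := isRotated_decomp ht
  simp only [List.cons_append, List.nil_append] at hl
  rcases l₂ with _ | ⟨x, l₂⟩
  · simp only [List.nil_append] at hl
    subst hl
    exact Or.inl ⟨[], t, by simp [hbd]⟩
  · simp only [List.cons_append] at hl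
    injection hl with h1 h2
    subst h1
    rcases l₂ with _ | ⟨y, l₂⟩
    · simp only [List.nil_append] at h2
      subst h2
      exact Or.inr ⟨t, by simpa using hbd⟩
    · simp only [List.cons_append] at h2
      injection h2 with h3 h4
      subst h3
      exact Or.inl ⟨l₁, l₂, by simp [hbd]⟩

lemma cyc3 {bd : List V} {p v q : V} (h : CPre bd [p, v, q]) :
    [p, v, q] <:+: bd ∨ (∃ m, bd = v :: q :: m ++ [p]) ∨ (∃ m, bd = q :: m ++ [p, v]) := by
  obtain ⟨t, ht⟩ := h
  obtain ⟨l₁, l₂, hbd, hl⟩ := isRotated_decomp ht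
  simp only [List.cons_append, List.nil_append] at hl
  rcases l₂ with _ | ⟨x, l₂⟩
  · simp only [List.nil_append] at hl
    subst hl
    exact Or.inl ⟨[], t, by simp [hbd]⟩
  · simp only [List.cons_append] at hl
    injection hl with h1 h2
    subst h1
    rcases l₂ with _ | ⟨y, l₂⟩
    · simp only [List.nil_append] at h2
      subst h2
      exact Or.inr (Or.inl ⟨t, by simpa using hbd⟩)
    · simp only [List.cons_append] at h2
      injection h2 with h3 h4
      subst h3
      rcases l₂ with _ | ⟨z, l₂⟩
      · simp only [List.nil_append] at h4
        subst h4
        exact Or.inr (Or.inr ⟨t, by simpa using hbd⟩)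
      · simp only [List.cons_append] at h4
        injection h4 with h5 h6
        subst h5
        exact Or.inl ⟨l₁, l₂, by simp [hbd]⟩

lemma card3 {a b c : V} (hab : a ≠ b) (hac : a ≠ c) (hbc : b ≠ c) :
    ({a, b, c} : Finset V).card = 3 := by
  rw [Finset.card_insert_of_notMem (by simp [hab, hac]), Finset.card_pair hbc]

lemma tri_ne {a b c : V} (h : ({a, b, c} : Finset V).card = 3) :
    a ≠ b ∧ a ≠ c ∧ b ≠ c := by
  have pair2 : ∀ x y : V, ({x, y} : Finset V).card ≤ 2 :=
    fun x y => (Finset.card_insert_le _ _).trans (by simp)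
  refine ⟨?_, ?_, ?_⟩ <;> rintro rfl
  · have hsub : ({a, a, c} : Finset V) ⊆ {a, c} := by
      intro x hx; simp at hx ⊢; tauto
    have := (Finset.card_le_card hsub).trans (pair2 a c)
    omega
  · have hsub : ({a, b, a} : Finset V) ⊆ {a, b} := by
      intro x hx; simp at hx ⊢; tauto
    have := (Finset.card_le_card hsub).trans (pair2 a b)
    omega
  · have hsub : ({a, b, b} : Finset V) ⊆ {a, b} := by
      intro x hx; simp at hx ⊢; tauto
    have := (Finset.card_le_card hsub).trans (pair2 a b)
    omega

def IsTri (F : Finset (Finset V)) (t : Finset V) : Prop := t ∈ F ∧ t.card = 3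

structure Inv (F : Finset (Finset V)) (bd : List V) : Prop where
  nodup : bd.Nodup
  hlen : 3 ≤ bd.length
  memV : ∀ v ∈ bd, ∃ s ∈ F, v ∈ s
  closed : ∀ t, IsTri F t → ∀ x ∈ t, ∀ y ∈ t, x ≠ y → ({x, y} : Finset V) ∈ F
  adj : ∀ u v, CPre bd [u, v] → (graphOf F).Adj u v
  uniq : ∀ u v, CPre bd [u, v] → ∀ t₁ t₂, IsTri F t₁ → IsTri F t₂ →
      u ∈ t₁ → v ∈ t₁ → u ∈ t₂ → v ∈ t₂ → t₁ = t₂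
  link : ∀ p v q, CPre bd [p, v, q] → ∃ ws : List V,
      ws.head? = some p ∧ ws.getLast? = some q ∧ ws.length = angle F v + 1 ∧
      ws.Chain' (fun x y => IsTri F {v, x, y})

lemma IsTri.mono {F F' : Finset (Finset V)} {t : Finset V} (h : IsTri F t) (hFF : F ⊆ F') :
    IsTri F' t := ⟨hFF h.1, h.2⟩

lemma angle_union (F S : Finset (Finset V)) (T : Finset V) (hT : T.card = 3)
    (hS : ∀ s ∈ S, s.card = 3 → s = T) (hTS : T ∈ S) (hTF : T ∉ F) (v : V) :
    angle (F ∪ S) v = angle F v + if v ∈ T then 1 else 0 := by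
  unfold angle
  rw [Finset.filter_union]
  have hSf : S.filter (fun s => s.card = 3 ∧ v ∈ s) = if v ∈ T then {T} else ∅ := by
    split_ifs with hv
    · apply Finset.ext
      intro s
      simp only [Finset.mem_filter, Finset.mem_singleton]
      constructor
      · rintro ⟨hs, h3, _⟩; exact hS s hs h3
      · rintro rfl; exact ⟨hTS, hT, hv⟩
    · apply Finset.filter_eq_empty_iff.2
      intro s hs
      rintro ⟨h3, hv'⟩
      exact hv (hS s hs h3 ▸ hv')
  rw [hSf]
  split_ifs with hv
  · rw [Finset.union_comm, ← Finset.insert_eq, Finset.card_insert_of_notMem (by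
      simp only [Finset.mem_filter]; tauto), add_comm]
  · simp

lemma triple_eq₁ (a b c : V) : ({b, a, c} : Finset V) = {a, b, c} := by
  ext w; simp; tauto

lemma triple_eq₂ (a b c : V) : ({a, c, b} : Finset V) = {a, b, c} := by
  ext w; simp; tauto

lemma triple_eq₃ (a b c : V) : ({c, a, b} : Finset V) = {a, b, c} := by
  ext w; simp; tauto

lemma triple_eq₄ (a b c : V) : ({c, b, a} : Finset V) = {a, b, c} := by
  ext w; simp; tauto

lemma triple_eq₅ (a b c : V) : ({b, c, a} : Finset V) = {a, b, c} := by
  ext w; simp; tauto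

lemma inv_rotate {F : Finset (Finset V)} (l₁ l₂ : List V) (h : Inv F (l₁ ++ l₂)) :
    Inv F (l₂ ++ l₁) := by
  have hrot : (l₁ ++ l₂) ~r (l₂ ++ l₁) := List.isRotated_append
  have hperm : (l₁ ++ l₂) ~ (l₂ ++ l₁) := hrot.perm
  refine ⟨hperm.nodup h.nodup, hperm.length_eq ▸ h.hlen, fun v hv => h.memV v (hperm.mem_iff.2 hv),
    h.closed, fun u v hc => h.adj u v (hc.of_rot hrot), fun u v hc => h.uniq u v (hc.of_rot hrot),
    fun p v q hc => h.link p v q (hc.of_rot hrot)⟩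

section Triangle

variable {a b c : V} (hab : a ≠ b) (hac : a ≠ c) (hbc : b ≠ c)

lemma triangle_mem_iff {t : Finset V} :
    t ∈ ({{a}, {b}, {c}, {a, b}, {a, c}, {b, c}, {a, b, c}} : Finset (Finset V)) ↔
      t = {a} ∨ t = {b} ∨ t = {c} ∨ t = {a, b} ∨ t = {a, c} ∨ t = {b, c} ∨ t = {a, b, c} := by
  simp [Finset.mem_insert]

include hab hac hbc in
lemma triangle_tri {t : Finset V}
    (ht : IsTri ({{a}, {b}, {c}, {a, b}, {a, c}, {b, c}, {a, b, c}} : Finset (Finset V)) t) :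
    t = {a, b, c} := by
  obtain ⟨hm, h3⟩ := ht
  rcases triangle_mem_iff.1 hm with rfl | rfl | rfl | rfl | rfl | rfl | rfl
  · simp at h3
  · simp at h3
  · simp at h3
  · rw [Finset.card_pair hab] at h3; omega
  · rw [Finset.card_pair hac] at h3; omega
  · rw [Finset.card_pair hbc] at h3; omega
  · rfl

include hab hac hbc in
lemma triangle_angle {v : V} (hv : v ∈ ({a, b, c} : Finset V)) :
    angle ({{a}, {b}, {c}, {a, b}, {a, c}, {b, c}, {a, b, c}} : Finset (Finset V)) v = 1 := by
  unfold angle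
  have : ({{a}, {b}, {c}, {a, b}, {a, c}, {b, c}, {a, b, c}} : Finset (Finset V)).filter
      (fun s => s.card = 3 ∧ v ∈ s) = {({a, b, c} : Finset V)} := by
    apply Finset.ext
    intro t
    simp only [Finset.mem_filter, Finset.mem_singleton]
    constructor
    · rintro ⟨hm, h3, _⟩
      exact triangle_tri hab hac hbc ⟨hm, h3⟩
    · rintro rfl
      exact ⟨by simp [triangle_mem_iff], card3 hab hac hbc, hv⟩
  rw [this, Finset.card_singleton]

include hab hac hbc in
lemma inv_triangle :
    Inv ({{a}, {b}, {c}, {a, b}, {a, c}, {b, c}, {a, b, c}} : Finset (Finset V)) [a, b, c] := by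
  set F₀ := ({{a}, {b}, {c}, {a, b}, {a, c}, {b, c}, {a, b, c}} : Finset (Finset V)) with hF₀
  have hT : ({a, b, c} : Finset V) ∈ F₀ := by simp [hF₀]
  have hpair : ∀ x ∈ ({a, b, c} : Finset V), ∀ y ∈ ({a, b, c} : Finset V), x ≠ y →
      ({x, y} : Finset V) ∈ F₀ := by
    have p1 : ({a, b} : Finset V) ∈ F₀ := by simp [hF₀]
    have p2 : ({a, c} : Finset V) ∈ F₀ := by simp [hF₀]
    have p3 : ({b, c} : Finset V) ∈ F₀ := by simp [hF₀]
    have p1' : ({b, a} : Finset V) ∈ F₀ := Finset.pair_comm a b ▸ p1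
    have p2' : ({c, a} : Finset V) ∈ F₀ := Finset.pair_comm a c ▸ p2
    have p3' : ({c, b} : Finset V) ∈ F₀ := Finset.pair_comm b c ▸ p3
    intro x hx y hy hxy
    simp only [Finset.mem_insert, Finset.mem_singleton] at hx hy
    rcases hx with rfl | rfl | rfl <;> rcases hy with rfl | rfl | rfl <;>
      first
        | exact absurd rfl hxy
        | assumption
  refine ⟨?_, by simp, ?_, ?_, ?_, ?_, ?_⟩
  · simp [hab, hac, hbc]
  · intro v hv
    simp only [List.mem_cons, List.not_mem_nil, or_false] at hv
    rcases hv with rfl | rfl | rfl <;> exact ⟨{v}, by simp [hF₀], by simp⟩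
  · intro t ht x hx y hy hxy
    rw [triangle_tri hab hac hbc ht] at hx hy
    exact hpair x hx y hy hxy
  · -- adj
    intro u v hc
    rcases cyc2 hc with hinf | ⟨m, hm⟩
    · obtain ⟨l₁, l₂, hl⟩ := hinf
      rcases l₁ with _ | ⟨x, l₁⟩
      · simp only [List.nil_append, List.cons_append] at hl
        injection hl with h1 h2; injection h2 with h3 h4
        subst h1; subst h3
        exact graphOf_adj.2 ⟨hab, by simp [hF₀]⟩
      · rcases l₁ with _ | ⟨y, l₁⟩
        · simp only [List.cons_append, List.nil_append] at hl
          injection hl with h1 h2; injection h2 with h3 h4; injection h4 with h5 h6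
          subst h3; subst h5
          exact graphOf_adj.2 ⟨hbc, by simp [hF₀]⟩
        · exfalso
          have h := congrArg List.length hl
          simp only [List.length_cons, List.length_append] at h
          omega
    · -- wrap : [a,b,c] = v :: m ++ [u]
      rcases m with _ | ⟨x, m⟩
      · simp at hm
      · rcases m with _ | ⟨y, m⟩
        · simp only [List.cons_append, List.nil_append] at hm
          injection hm with h1 h2; injection h2 with h3 h4; injection h4 with h5 h6
          subst h1; subst h3; subst h5
          exact graphOf_adj.2 ⟨hac.symm, by rw [Finset.pair_comm]; simp [hF₀]⟩
        · exfalso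
          have h := congrArg List.length hm
          simp only [List.length_cons, List.length_append] at h
          omega
  · -- uniq
    intro u v _ t₁ t₂ h₁ h₂ _ _ _ _
    rw [triangle_tri hab hac hbc h₁, triangle_tri hab hac hbc h₂]
  · -- link
    intro p v q hc
    have key : ∀ x y z : V, x ∈ ({a, b, c} : Finset V) → y ∈ ({a, b, c} : Finset V) →
        ({y, x, z} : Finset V) = {a, b, c} → ∃ ws : List V,
        ws.head? = some x ∧ ws.getLast? = some z ∧ ws.length = angle F₀ y + 1 ∧
        ws.Chain' (fun s t => IsTri F₀ {y, s, t}) := by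
      intro x y z hx hy he
      refine ⟨[x, z], rfl, rfl, ?_, ?_⟩
      · have h1 := triangle_angle hab hac hbc hy; rw [← hF₀] at h1; simp [h1]
      · refine List.isChain_cons_cons.2 ⟨⟨?_, ?_⟩, List.isChain_singleton _⟩
        · rw [he]; exact hT
        · rw [he]; exact card3 hab hac hbc
    rcases cyc3 hc with hinf | ⟨m, hm⟩ | ⟨m, hm⟩
    · obtain ⟨l₁, l₂, hl⟩ := hinf
      have hlen := congrArg List.length hl
      simp only [List.length_append, List.length_cons, List.length_nil] at hlen
      have hl1 : l₁ = [] := List.length_eq_zero_iff.1 (by omega)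
      have hl2 : l₂ = [] := List.length_eq_zero_iff.1 (by omega)
      subst hl1; subst hl2
      simp only [List.nil_append, List.append_nil] at hl
      injection hl with h1 h2; injection h2 with h3 h4; injection h4 with h5 h6
      rw [h1, h3, h5]
      exact key a b c (by simp) (by simp) (triple_eq₁ a b c)
    · -- [a,b,c] = v :: q :: m ++ [p]
      rcases m with _ | ⟨x, m⟩
      · try simp only [List.nil_append] at hm
        injection hm with h1 h2; injection h2 with h3 h4; injection h4 with h5 h6
        rw [← h1, ← h3, ← h5]
        exact key c a b (by simp) (by simp) (triple_eq₂ a b c)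
      · exfalso
        have h := congrArg List.length hm
        simp only [List.length_cons, List.length_append] at h
        omega
    · -- [a,b,c] = q :: m ++ [p, v]
      rcases m with _ | ⟨x, m⟩
      · try simp only [List.nil_append] at hm
        injection hm with h1 h2; injection h2 with h3 h4; injection h4 with h5 h6
        rw [← h1, ← h3, ← h5]
        exact key b c a (by simp) (by simp) (triple_eq₄ a b c)
      · exfalso
        have h := congrArg List.length hm
        simp only [List.length_cons, List.length_append] at h
        omega

end Triangle


lemma adj_mono {F F' : Finset (Finset V)} {u v : V} (h : (graphOf F).Adj u v) (hs : F ⊆ F') :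
    (graphOf F').Adj u v := graphOf_adj.2 ⟨(graphOf_adj.1 h).1, hs (graphOf_adj.1 h).2⟩

lemma inv_glue_vertex {F : Finset (Finset V)} {a b d : V} {rest : List V}
    (ih : Inv F (a :: b :: rest)) (hd : ∀ s ∈ F, d ∉ s) :
    Inv (F ∪ ({{d}, {a, d}, {b, d}, {a, b, d}} : Finset (Finset V))) (a :: d :: b :: rest) := by
  obtain ⟨nodup0, hlen0, memV0, closed0, adj0, uniq0, link0⟩ := ih
  set T : Finset V := {a, b, d} with hTdef
  set S : Finset (Finset V) := {{d}, {a, d}, {b, d}, {a, b, d}} with hSdef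
  set F' : Finset (Finset V) := F ∪ S with hF'def
  have hFF : F ⊆ F' := Finset.subset_union_left
  have hdbd : d ∉ (a :: b :: rest) := by
    intro hmem
    obtain ⟨s, hs, hvs⟩ := memV0 d hmem
    exact hd s hs hvs
  have hda : d ≠ a := by intro h; exact hdbd (by simp [h])
  have hdb : d ≠ b := by intro h; exact hdbd (by simp [h])
  have hdr : d ∉ rest := fun h => hdbd (by simp [h])
  have had : a ≠ d := Ne.symm hda
  have hbd : b ≠ d := Ne.symm hdb
  have hnd1 := List.nodup_cons.1 nodup0
  have hnd2 := List.nodup_cons.1 hnd1.2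
  have hab : a ≠ b := fun h => hnd1.1 (by simp [h])
  have har : a ∉ rest := fun h => hnd1.1 (by simp [h])
  have hbr : b ∉ rest := hnd2.1
  have hrlen : 1 ≤ rest.length := by
    have := hlen0
    simp only [List.length_cons] at this
    omega
  have hrne : rest ≠ [] := by
    intro h
    rw [h] at hrlen
    simp at hrlen
  have hT3 : T.card = 3 := card3 hab had hbd
  have hTS : T ∈ S := by rw [hSdef, hTdef]; simp
  have hTF : T ∉ F := fun h => hd T h (by rw [hTdef]; simp)
  have hTtri : IsTri F' T := ⟨Finset.mem_union.2 (Or.inr hTS), hT3⟩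
  have hScard : ∀ s ∈ S, s.card = 3 → s = T := by
    intro s hs h3
    rw [hSdef] at hs
    simp only [Finset.mem_insert, Finset.mem_singleton] at hs
    rcases hs with rfl | rfl | rfl | rfl
    · simp at h3
    · rw [Finset.card_pair had] at h3; omega
    · rw [Finset.card_pair hbd] at h3; omega
    · rfl
  have hangle : ∀ v, angle F' v = angle F v + if v ∈ T then 1 else 0 := fun v =>
    angle_union F S T hT3 hScard hTS hTF v
  have hangleU : ∀ v, v ∉ T → angle F' v = angle F v := by
    intro v hv
    rw [hangle v, if_neg hv, add_zero]
  have htri' : ∀ t, IsTri F' t → IsTri F t ∨ t = T := by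
    rintro t ⟨hm, h3⟩
    rcases Finset.mem_union.1 hm with h | h
    · exact Or.inl ⟨h, h3⟩
    · exact Or.inr (hScard t h h3)
  have pab : ({a, b} : Finset V) ∈ F := (graphOf_adj.1 (adj0 a b (cpre_prefix ⟨rest, rfl⟩))).2
  have pad : ({a, d} : Finset V) ∈ F' := Finset.mem_union.2 (Or.inr (by rw [hSdef]; simp))
  have pbd : ({b, d} : Finset V) ∈ F' := Finset.mem_union.2 (Or.inr (by rw [hSdef]; simp))
  have hrestT : ∀ v ∈ rest, v ∉ T := by
    intro v hv h
    rw [hTdef] at h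
    simp only [Finset.mem_insert, Finset.mem_singleton] at h
    rcases h with rfl | rfl | rfl
    · exact har hv
    · exact hbr hv
    · exact hdr hv
  refine ⟨?_, ?_, ?_, ?_, ?_, ?_, ?_⟩
  · -- nodup
    refine List.nodup_cons.2 ⟨?_, List.nodup_cons.2 ⟨?_, hnd1.2⟩⟩
    · intro hmem
      rcases List.mem_cons.1 hmem with rfl | h
      · exact had rfl
      · exact hnd1.1 h
    · intro hmem
      rcases List.mem_cons.1 hmem with rfl | h
      · exact hdb rfl
      · exact hdr h
  · -- length
    simp only [List.length_cons]
    omega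
  · -- memV
    intro v hv
    simp only [List.mem_cons] at hv
    rcases hv with rfl | rfl | rfl | h
    · obtain ⟨s, hs, h⟩ := memV0 v (by simp)
      exact ⟨s, hFF hs, h⟩
    · exact ⟨{v}, Finset.mem_union.2 (Or.inr (by rw [hSdef]; simp)), by simp⟩
    · obtain ⟨s, hs, h⟩ := memV0 v (by simp)
      exact ⟨s, hFF hs, h⟩
    · obtain ⟨s, hs, h⟩ := memV0 v (by simp [h])
      exact ⟨s, hFF hs, h⟩
  · -- closed
    intro t ht x hx y hy hxy
    rcases htri' t ht with h | rfl
    · exact hFF (closed0 t h x hx y hy hxy)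
    · rw [hTdef] at hx hy
      simp only [Finset.mem_insert, Finset.mem_singleton] at hx hy
      have pab' : ({a, b} : Finset V) ∈ F' := hFF pab
      have pba : ({b, a} : Finset V) ∈ F' := Finset.pair_comm a b ▸ pab'
      have pda : ({d, a} : Finset V) ∈ F' := Finset.pair_comm a d ▸ pad
      have pdb : ({d, b} : Finset V) ∈ F' := Finset.pair_comm b d ▸ pbd
      rcases hx with rfl | rfl | rfl <;> rcases hy with rfl | rfl | rfl <;>
        first
          | exact absurd rfl hxy
          | assumption
  · -- adj
    intro u v hc
    rcases cyc2 hc with ⟨l₁, l₂, hl⟩ | ⟨m, hm⟩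
    · rcases l₁ with _ | ⟨x, l₁⟩
      · simp only [List.nil_append, List.cons_append] at hl
        injection hl with h1 h2
        injection h2 with h3 h4
        rw [h1, h3]
        exact graphOf_adj.2 ⟨had, pad⟩
      · rcases l₁ with _ | ⟨y, l₁⟩
        · simp only [List.cons_append, List.nil_append] at hl
          injection hl with h1 h2
          injection h2 with h3 h4
          injection h4 with h5 h6
          rw [h3, h5]
          exact graphOf_adj.2 ⟨hdb, Finset.pair_comm b d ▸ pbd⟩
        · simp only [List.cons_append] at hl
          injection hl with h1 h2
          injection h2 with h3 h4
          have hinf : [u, v] <:+: b :: rest := ⟨l₁, l₂, h4⟩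
          exact adj_mono (adj0 u v (cpre_infix (hinf.trans ⟨[a], [], by simp⟩))) hFF
    · rcases m with _ | ⟨x, m⟩
      · exfalso
        have h := congrArg List.length hm
        simp only [List.length_cons, List.length_append, List.length_nil] at h
        omega
      · rcases m with _ | ⟨y, m⟩
        · exfalso
          have h := congrArg List.length hm
          simp only [List.length_cons, List.length_append, List.length_nil] at h
          omega
        · simp only [List.cons_append] at hm
          injection hm with h1 h2
          injection h2 with h3 h4
          injection h4 with h5 h6
          subst h1
          have hcp : CPre (a :: b :: rest) [u, a] := cpre_wrap1' (m := b :: m) (by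
            rw [h6]
            rfl)
          exact adj_mono (adj0 u a hcp) hFF
  · -- uniq
    intro u v hc t₁ t₂ h₁ h₂ hu1 hv1 hu2 hv2
    have hdT : ∀ t, IsTri F' t → d ∈ t → t = T := by
      intro t ht hdt
      rcases htri' t ht with h | rfl
      · exact absurd hdt (hd t h.1)
      · rfl
    rcases cyc2 hc with ⟨l₁, l₂, hl⟩ | ⟨m, hm⟩
    · rcases l₁ with _ | ⟨x, l₁⟩
      · simp only [List.nil_append, List.cons_append] at hl
        injection hl with h1 h2
        injection h2 with h3 h4
        rw [h3] at hv1 hv2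
        rw [hdT t₁ h₁ hv1, hdT t₂ h₂ hv2]
      · rcases l₁ with _ | ⟨y, l₁⟩
        · simp only [List.cons_append, List.nil_append] at hl
          injection hl with h1 h2
          injection h2 with h3 h4
          rw [h3] at hu1 hu2
          rw [hdT t₁ h₁ hu1, hdT t₂ h₂ hu2]
        · simp only [List.cons_append] at hl
          injection hl with h1 h2
          injection h2 with h3 h4
          have hinf : [u, v] <:+: b :: rest := ⟨l₁, l₂, h4⟩
          have huv : u ≠ v := by
            have hnd : [u, v].Nodup := (hinf.sublist).nodup hnd1.2
            simp at hnd
            exact hnd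
          have humem : u ∈ b :: rest := hinf.subset (by simp)
          have hvmem : v ∈ b :: rest := hinf.subset (by simp)
          have hnotT : ∀ t, IsTri F' t → u ∈ t → v ∈ t → IsTri F t := by
            intro t ht hut hvt
            rcases htri' t ht with h | rfl
            · exact h
            · exfalso
              rw [hTdef] at hut hvt
              simp only [Finset.mem_insert, Finset.mem_singleton] at hut hvt
              simp only [List.mem_cons] at humem hvmem
              have hub : u = b := by
                rcases hut with rfl | rfl | rfl
                · rcases humem with h | h
                  · exact h
                  · exact absurd h har
                · rfl
                · rcases humem with h | h
                  · exact absurd h hdb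
                  · exact absurd h hdr
              have hvb : v = b := by
                rcases hvt with rfl | rfl | rfl
                · rcases hvmem with h | h
                  · exact h
                  · exact absurd h har
                · rfl
                · rcases hvmem with h | h
                  · exact absurd h hdb
                  · exact absurd h hdr
              exact huv (hub.trans hvb.symm)
          exact uniq0 u v (cpre_infix (hinf.trans ⟨[a], [], by simp⟩)) t₁ t₂
            (hnotT t₁ h₁ hu1 hv1) (hnotT t₂ h₂ hu2 hv2) hu1 hv1 hu2 hv2
    · rcases m with _ | ⟨x, m⟩
      · exfalso
        have h := congrArg List.length hm
        simp only [List.length_cons, List.length_append, List.length_nil] at h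
        omega
      · rcases m with _ | ⟨y, m⟩
        · exfalso
          have h := congrArg List.length hm
          simp only [List.length_cons, List.length_append, List.length_nil] at h
          omega
        · simp only [List.cons_append] at hm
          injection hm with h1 h2
          injection h2 with h3 h4
          injection h4 with h5 h6
          subst h1
          have humem : u ∈ rest := by
            rw [h6]
            simp
          have hnotT : ∀ t, IsTri F' t → u ∈ t → IsTri F t := by
            intro t ht hut
            rcases htri' t ht with h | rfl
            · exact h
            · exfalso
              rw [hTdef] at hut
              simp only [Finset.mem_insert, Finset.mem_singleton] at hut
              rcases hut with rfl | rfl | rfl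
              · exact har humem
              · exact hbr humem
              · exact hdr humem
          have hcp : CPre (a :: b :: rest) [u, a] := cpre_wrap1' (m := b :: m) (by
            rw [h6]; rfl)
          exact uniq0 u a hcp t₁ t₂ (hnotT t₁ h₁ hu1) (hnotT t₂ h₂ hu2) hu1 hv1 hu2 hv2
  · -- link
    intro p v q hc
    have hupg : ∀ p' v' q' : V, v' ∉ T → CPre (a :: b :: rest) [p', v', q'] →
        (∃ ws : List V, ws.head? = some p' ∧ ws.getLast? = some q' ∧
          ws.length = angle F' v' + 1 ∧ ws.Chain' (fun x y => IsTri F' {v', x, y})) := by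
      intro p' v' q' hv' hcp
      obtain ⟨ws, h1, h2, h3, h4⟩ := link0 p' v' q' hcp
      exact ⟨ws, h1, h2, by rw [hangleU v' hv']; exact h3,
        List.IsChain.imp (fun x y hxy => hxy.mono hFF) h4⟩
    rcases cyc3 hc with ⟨l₁, l₂, hl⟩ | ⟨m, hm⟩ | ⟨m, hm⟩
    · rcases l₁ with _ | ⟨x, l₁⟩
      · -- (p,v,q) = (a,d,b)
        simp only [List.nil_append, List.cons_append] at hl
        injection hl with h1 h2
        injection h2 with h3 h4
        injection h4 with h5 h6
        rw [h1, h3, h5]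
        refine ⟨[a, b], rfl, rfl, ?_, ?_⟩
        · rw [hangle d, if_pos (by rw [hTdef]; simp)]
          have h0 : angle F d = 0 := by
            unfold angle
            rw [Finset.card_eq_zero, Finset.filter_eq_empty_iff]
            intro s hs hP
            exact hd s hs hP.2
          rw [h0]
          rfl
        · refine List.isChain_cons_cons.2 ⟨?_, List.isChain_singleton _⟩
          rw [triple_eq₃ a b d]
          exact hTtri
      · rcases l₁ with _ | ⟨y, l₁⟩
        · -- (p,v,q) = (d,b,q), rest = q :: l₂
          simp only [List.cons_append, List.nil_append] at hl
          injection hl with h1 h2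
          injection h2 with h3 h4
          injection h4 with h5 h6
          rw [h3, h5]
          obtain ⟨ws, hh, hlast, hlenw, hchain⟩ :=
            link0 a b q (cpre_prefix ⟨l₂, by rw [← h6]; rfl⟩)
          rcases ws with _ | ⟨w0, ws₁⟩
          · simp at hh
          · simp only [List.head?_cons, Option.some.injEq] at hh
            refine ⟨d :: w0 :: ws₁, rfl, ?_, ?_, ?_⟩
            · rw [List.getLast?_cons_cons]
              exact hlast
            · simp only [List.length_cons] at hlenw ⊢
              rw [hangle b, if_pos (by rw [hTdef]; simp)]
              omega
            · refine List.isChain_cons_cons.2 ⟨?_, List.IsChain.imp (fun x y hxy => hxy.mono hFF) hchain⟩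
              rw [hh, triple_eq₅ a b d]
              exact hTtri
        · rcases l₁ with _ | ⟨z, l₁⟩
          · -- (p,v,q) = (b, v, q) with rest = v :: q :: l₂
            simp only [List.cons_append, List.nil_append] at hl
            injection hl with h1 h2
            injection h2 with h3 h4
            injection h4 with h5 h6
            have hrest : rest = v :: q :: l₂ := h6.symm
            have hvrest : v ∈ rest := by rw [hrest]; simp
            refine hupg p v q (hrestT v hvrest) (cpre_infix ⟨[a], l₂, ?_⟩)
            rw [h5, hrest]
            rfl
          · -- window inside rest
            simp only [List.cons_append] at hl
            injection hl with h1 h2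
            injection h2 with h3 h4
            injection h4 with h5 h6
            -- h6 : (l₁ ++ [p,v,q]) ++ l₂ = rest
            have hvrest : v ∈ rest := by
              rw [← h6]
              simp
            refine hupg p v q (hrestT v hvrest) (cpre_infix ?_)
            have hinf : [p, v, q] <:+: rest := ⟨l₁, l₂, h6⟩
            exact hinf.trans ⟨[a, b], [], by simp⟩
    · -- wrap-1 : bd' = v :: q :: m ++ [p]
      rcases m with _ | ⟨x, m⟩
      · exfalso
        have h := congrArg List.length hm
        simp only [List.length_cons, List.length_append, List.length_nil] at h
        omega
      · simp only [List.cons_append] at hm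
        injection hm with h1 h2
        injection h2 with h3 h4
        injection h4 with h5 h6
        subst h1; subst h3; subst h5
        -- center a : old window (p, a, b), rest = m ++ [p]
        have hcp : CPre (a :: b :: rest) [p, a, b] := cpre_wrap1 (m := m) (by rw [h6]; rfl)
        obtain ⟨ws, hh, hlast, hlenw, hchain⟩ := link0 p a b hcp
        rcases ws with _ | ⟨w0, ws₁⟩
        · simp at hh
        · refine ⟨(w0 :: ws₁) ++ [d], by simpa using hh, by rw [List.getLast?_concat], ?_, ?_⟩
          · simp only [List.length_append, List.length_cons] at hlenw ⊢
            rw [hangle a, if_pos (by rw [hTdef]; simp)]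
            simp only [List.length_nil]
            omega
          · refine List.isChain_append.2
              ⟨List.IsChain.imp (fun x y hxy => hxy.mono hFF) hchain, List.isChain_singleton _, ?_⟩
            intro x hx y hy
            rw [hlast] at hx
            simp only [Option.mem_def, Option.some.injEq] at hx
            simp only [List.head?_cons, Option.mem_def, Option.some.injEq] at hy
            subst hx; subst hy
            exact hTtri
    · -- wrap-2 : bd' = q :: m ++ [p, v]
      rcases m with _ | ⟨x, m⟩
      · exfalso
        have h := congrArg List.length hm
        simp only [List.length_cons, List.length_append, List.length_nil] at h
        omega
      · rcases m with _ | ⟨y, m⟩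
        · -- rest = [v], p = b : window (b, v, a)
          simp only [List.cons_append, List.nil_append] at hm
          injection hm with h1 h2
          injection h2 with h3 h4
          injection h4 with h5 h6
          subst h1; subst h3; subst h5
          have hrest : rest = [v] := h6
          have hvrest : v ∈ rest := by rw [hrest]; simp
          refine hupg b v a (hrestT v hvrest) (cpre_wrap2 (m := []) (by rw [hrest]; rfl))
        · -- rest = m ++ [p, v] : window (p, v, a)
          simp only [List.cons_append] at hm
          injection hm with h1 h2
          injection h2 with h3 h4
          injection h4 with h5 h6
          subst h1; subst h3; subst h5
          have hvrest : v ∈ rest := by rw [h6]; simp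
          refine hupg p v a (hrestT v hvrest) (cpre_wrap2 (m := b :: m) (by rw [h6]; rfl))


lemma inv_glue_edge {F : Finset (Finset V)} {a b c : V} {rest : List V}
    (ih : Inv F (a :: b :: c :: rest)) (hne : rest ≠ []) (hac : a ≠ c)
    (hacF : ({a, c} : Finset V) ∉ F) :
    Inv (F ∪ ({{a, c}, {a, b, c}} : Finset (Finset V))) (a :: c :: rest) := by
  obtain ⟨nodup0, hlen0, memV0, closed0, adj0, uniq0, link0⟩ := ih
  set T : Finset V := {a, b, c} with hTdef
  set S : Finset (Finset V) := {{a, c}, {a, b, c}} with hSdef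
  set F' : Finset (Finset V) := F ∪ S with hF'def
  have hFF : F ⊆ F' := Finset.subset_union_left
  have hnd1 := List.nodup_cons.1 nodup0
  have hnd2 := List.nodup_cons.1 hnd1.2
  have hnd3 := List.nodup_cons.1 hnd2.2
  have hab : a ≠ b := fun h => hnd1.1 (by simp [h])
  have har : a ∉ rest := fun h => hnd1.1 (by simp [h])
  have hbc : b ≠ c := fun h => hnd2.1 (by simp [h])
  have hbr : b ∉ rest := fun h => hnd2.1 (by simp [h])
  have hcr : c ∉ rest := hnd3.1
  have hrlen : 1 ≤ rest.length := List.length_pos_iff.2 hne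
  have hT3 : T.card = 3 := card3 hab hac hbc
  have hTS : T ∈ S := by rw [hSdef, hTdef]; simp
  have hTF : T ∉ F := fun h =>
    hacF (closed0 T ⟨h, hT3⟩ a (by rw [hTdef]; simp) c (by rw [hTdef]; simp) hac)
  have hTtri : IsTri F' T := ⟨Finset.mem_union.2 (Or.inr hTS), hT3⟩
  have hScard : ∀ s ∈ S, s.card = 3 → s = T := by
    intro s hs h3
    rw [hSdef] at hs
    simp only [Finset.mem_insert, Finset.mem_singleton] at hs
    rcases hs with rfl | rfl
    · rw [Finset.card_pair hac] at h3; omega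
    · rfl
  have hangle : ∀ v, angle F' v = angle F v + if v ∈ T then 1 else 0 := fun v =>
    angle_union F S T hT3 hScard hTS hTF v
  have hangleU : ∀ v, v ∉ T → angle F' v = angle F v := by
    intro v hv
    rw [hangle v, if_neg hv, add_zero]
  have htri' : ∀ t, IsTri F' t → IsTri F t ∨ t = T := by
    rintro t ⟨hm, h3⟩
    rcases Finset.mem_union.1 hm with h | h
    · exact Or.inl ⟨h, h3⟩
    · exact Or.inr (hScard t h h3)
  have pab : ({a, b} : Finset V) ∈ F := (graphOf_adj.1 (adj0 a b (cpre_prefix ⟨c :: rest, rfl⟩))).2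
  have pbc : ({b, c} : Finset V) ∈ F := (graphOf_adj.1 (adj0 b c (cpre_infix ⟨[a], rest, rfl⟩))).2
  have pacF' : ({a, c} : Finset V) ∈ F' := Finset.mem_union.2 (Or.inr (by rw [hSdef]; simp))
  have hrestT : ∀ v ∈ rest, v ∉ T := by
    intro v hv h
    rw [hTdef] at h
    simp only [Finset.mem_insert, Finset.mem_singleton] at h
    rcases h with rfl | rfl | rfl
    · exact har hv
    · exact hbr hv
    · exact hcr hv
  refine ⟨?_, ?_, ?_, ?_, ?_, ?_, ?_⟩
  · -- nodup
    refine List.nodup_cons.2 ⟨?_, List.nodup_cons.2 ⟨hnd3.1, hnd3.2⟩⟩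
    intro hmem
    rcases List.mem_cons.1 hmem with rfl | h
    · exact hac rfl
    · exact har h
  · -- length
    simp only [List.length_cons]
    omega
  · -- memV
    intro v hv
    simp only [List.mem_cons] at hv
    have hv0 : v ∈ a :: b :: c :: rest := by
      simp only [List.mem_cons]
      tauto
    obtain ⟨s, hs, h⟩ := memV0 v hv0
    exact ⟨s, hFF hs, h⟩
  · -- closed
    intro t ht x hx y hy hxy
    rcases htri' t ht with h | rfl
    · exact hFF (closed0 t h x hx y hy hxy)
    · rw [hTdef] at hx hy
      simp only [Finset.mem_insert, Finset.mem_singleton] at hx hy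
      have pab' : ({a, b} : Finset V) ∈ F' := hFF pab
      have pbc' : ({b, c} : Finset V) ∈ F' := hFF pbc
      have pba : ({b, a} : Finset V) ∈ F' := Finset.pair_comm a b ▸ pab'
      have pcb : ({c, b} : Finset V) ∈ F' := Finset.pair_comm b c ▸ pbc'
      have pca : ({c, a} : Finset V) ∈ F' := Finset.pair_comm a c ▸ pacF'
      rcases hx with rfl | rfl | rfl <;> rcases hy with rfl | rfl | rfl <;>
        first
          | exact absurd rfl hxy
          | assumption
  · -- adj
    intro u v hc
    rcases cyc2 hc with ⟨l₁, l₂, hl⟩ | ⟨m, hm⟩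
    · rcases l₁ with _ | ⟨x, l₁⟩
      · simp only [List.nil_append, List.cons_append] at hl
        injection hl with h1 h2
        injection h2 with h3 h4
        rw [h1, h3]
        exact graphOf_adj.2 ⟨hac, pacF'⟩
      · rcases l₁ with _ | ⟨y, l₁⟩
        · simp only [List.cons_append, List.nil_append] at hl
          injection hl with h1 h2
          injection h2 with h3 h4
          rw [h3]
          refine adj_mono (adj0 c v (cpre_infix ⟨[a, b], l₂, ?_⟩)) hFF
          rw [← h4]
          rfl
        · simp only [List.cons_append] at hl
          injection hl with h1 h2
          injection h2 with h3 h4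
          have hinf : [u, v] <:+: rest := ⟨l₁, l₂, h4⟩
          exact adj_mono (adj0 u v (cpre_infix (hinf.trans ⟨[a, b, c], [], by simp⟩))) hFF
    · rcases m with _ | ⟨x, m⟩
      · exfalso
        have h := congrArg List.length hm
        simp only [List.length_cons, List.length_append, List.length_nil] at h
        omega
      · simp only [List.cons_append] at hm
        injection hm with h1 h2
        injection h2 with h3 h4
        subst h1; subst h3
        have hcp : CPre (a :: b :: c :: rest) [u, a] := cpre_wrap1' (m := b :: c :: m) (by
          rw [h4]; rfl)
        exact adj_mono (adj0 u a hcp) hFF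
  · -- uniq
    intro u v hc t₁ t₂ h₁ h₂ hu1 hv1 hu2 hv2
    have haC : ∀ t, IsTri F' t → a ∈ t → c ∈ t → t = T := by
      intro t ht hat hct
      rcases htri' t ht with h | rfl
      · exact absurd (closed0 t h a hat c hct hac) hacF
      · rfl
    have hnotT : ∀ w, w ∈ rest → ∀ t, IsTri F' t → w ∈ t → IsTri F t := by
      intro w hw t ht hwt
      rcases htri' t ht with h | rfl
      · exact h
      · exfalso
        exact hrestT w hw hwt
    rcases cyc2 hc with ⟨l₁, l₂, hl⟩ | ⟨m, hm⟩
    · rcases l₁ with _ | ⟨x, l₁⟩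
      · simp only [List.nil_append, List.cons_append] at hl
        injection hl with h1 h2
        injection h2 with h3 h4
        rw [h1] at hu1 hu2
        rw [h3] at hv1 hv2
        rw [haC t₁ h₁ hu1 hv1, haC t₂ h₂ hu2 hv2]
      · rcases l₁ with _ | ⟨y, l₁⟩
        · simp only [List.cons_append, List.nil_append] at hl
          injection hl with h1 h2
          injection h2 with h3 h4
          rw [h3] at hu1 hu2
          have hvrest : v ∈ rest := by rw [← h4]; simp
          have hcp : CPre (a :: b :: c :: rest) [c, v] := cpre_infix ⟨[a, b], l₂, by
            rw [← h4]; rfl⟩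
          exact uniq0 c v hcp t₁ t₂ (hnotT v hvrest t₁ h₁ hv1) (hnotT v hvrest t₂ h₂ hv2)
            hu1 hv1 hu2 hv2
        · simp only [List.cons_append] at hl
          injection hl with h1 h2
          injection h2 with h3 h4
          have hinf : [u, v] <:+: rest := ⟨l₁, l₂, h4⟩
          have hurest : u ∈ rest := hinf.subset (by simp)
          exact uniq0 u v (cpre_infix (hinf.trans ⟨[a, b, c], [], by simp⟩)) t₁ t₂
            (hnotT u hurest t₁ h₁ hu1) (hnotT u hurest t₂ h₂ hu2) hu1 hv1 hu2 hv2
    · rcases m with _ | ⟨x, m⟩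
      · exfalso
        have h := congrArg List.length hm
        simp only [List.length_cons, List.length_append, List.length_nil] at h
        omega
      · simp only [List.cons_append] at hm
        injection hm with h1 h2
        injection h2 with h3 h4
        subst h1; subst h3
        have hurest : u ∈ rest := by rw [h4]; simp
        have hcp : CPre (a :: b :: c :: rest) [u, a] := cpre_wrap1' (m := b :: c :: m) (by
          rw [h4]; rfl)
        exact uniq0 u a hcp t₁ t₂ (hnotT u hurest t₁ h₁ hu1) (hnotT u hurest t₂ h₂ hu2)
          hu1 hv1 hu2 hv2
  · -- link
    intro p v q hc
    have hupg : ∀ p' v' q' : V, v' ∉ T → CPre (a :: b :: c :: rest) [p', v', q'] →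
        (∃ ws : List V, ws.head? = some p' ∧ ws.getLast? = some q' ∧
          ws.length = angle F' v' + 1 ∧ ws.Chain' (fun x y => IsTri F' {v', x, y})) := by
      intro p' v' q' hv' hcp
      obtain ⟨ws, h1, h2, h3, h4⟩ := link0 p' v' q' hcp
      exact ⟨ws, h1, h2, by rw [hangleU v' hv']; exact h3,
        List.IsChain.imp (fun x y hxy => hxy.mono hFF) h4⟩
    rcases cyc3 hc with ⟨l₁, l₂, hl⟩ | ⟨m, hm⟩ | ⟨m, hm⟩
    · rcases l₁ with _ | ⟨x, l₁⟩
      · -- (p,v,q) = (a, c, q), rest = q :: l₂ ; center c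
        simp only [List.nil_append, List.cons_append] at hl
        injection hl with h1 h2
        injection h2 with h3 h4
        rw [h1, h3]
        obtain ⟨ws, hh, hlast, hlenw, hchain⟩ :=
          link0 b c q (cpre_infix ⟨[a], l₂, by rw [← h4]; rfl⟩)
        rcases ws with _ | ⟨w0, ws₁⟩
        · simp at hh
        · simp only [List.head?_cons, Option.some.injEq] at hh
          refine ⟨a :: w0 :: ws₁, rfl, ?_, ?_, ?_⟩
          · rw [List.getLast?_cons_cons]
            exact hlast
          · simp only [List.length_cons] at hlenw ⊢
            rw [hangle c, if_pos (by rw [hTdef]; simp)]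
            omega
          · refine List.isChain_cons_cons.2 ⟨?_, List.IsChain.imp (fun x y hxy => hxy.mono hFF) hchain⟩
            rw [hh, triple_eq₃ a b c]
            exact hTtri
      · rcases l₁ with _ | ⟨y, l₁⟩
        · -- (p,v,q) = (c, v, q), rest = v :: q :: l₂, center v ∈ rest
          simp only [List.cons_append, List.nil_append] at hl
          injection hl with h1 h2
          injection h2 with h3 h4
          rw [h3]
          have hvrest : v ∈ rest := by rw [← h4]; simp
          refine hupg c v q (hrestT v hvrest) (cpre_infix ⟨[a, b], l₂, ?_⟩)
          rw [← h4]
          rfl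
        · -- window inside rest
          simp only [List.cons_append] at hl
          injection hl with h1 h2
          injection h2 with h3 h4
          have hvrest : v ∈ rest := by
            rw [← h4]
            simp
          have hinf : [p, v, q] <:+: rest := ⟨l₁, l₂, h4⟩
          exact hupg p v q (hrestT v hvrest) (cpre_infix (hinf.trans ⟨[a, b, c], [], by simp⟩))
    · -- wrap-1 : bd' = v :: q :: m ++ [p] ; v = a, q = c, rest = m ++ [p] ; center a
      simp only [List.cons_append] at hm
      injection hm with h1 h2
      injection h2 with h3 h4
      subst h1; subst h3
      have hcp : CPre (a :: b :: c :: rest) [p, a, b] := cpre_wrap1 (m := c :: m) (by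
        rw [h4]; rfl)
      obtain ⟨ws, hh, hlast, hlenw, hchain⟩ := link0 p a b hcp
      rcases ws with _ | ⟨w0, ws₁⟩
      · simp at hh
      · refine ⟨(w0 :: ws₁) ++ [c], by simpa using hh, by rw [List.getLast?_concat], ?_, ?_⟩
        · simp only [List.length_append, List.length_cons, List.length_nil] at hlenw ⊢
          rw [hangle a, if_pos (by rw [hTdef]; simp)]
          omega
        · refine List.isChain_append.2
            ⟨List.IsChain.imp (fun x y hxy => hxy.mono hFF) hchain, List.isChain_singleton _, ?_⟩
          intro x hx y hy
          rw [hlast] at hx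
          simp only [Option.mem_def, Option.some.injEq] at hx
          simp only [List.head?_cons, Option.mem_def, Option.some.injEq] at hy
          subst hx; subst hy
          exact hTtri
    · -- wrap-2 : bd' = q :: m ++ [p, v] ; q = a
      rcases m with _ | ⟨x, m⟩
      · -- rest = [v], p = c : window (c, v, a)
        simp only [List.cons_append, List.nil_append] at hm
        injection hm with h1 h2
        injection h2 with h3 h4
        subst h1; subst h3
        have hrest : rest = [v] := h4
        have hvrest : v ∈ rest := by rw [hrest]; simp
        refine hupg c v a (hrestT v hvrest) (cpre_wrap2 (m := [b]) (by rw [hrest]; rfl))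
      · -- rest = m ++ [p, v] : window (p, v, a)
        simp only [List.cons_append] at hm
        injection hm with h1 h2
        injection h2 with h3 h4
        subst h1; subst h3
        have hvrest : v ∈ rest := by rw [h4]; simp
        refine hupg p v a (hrestT v hvrest) (cpre_wrap2 (m := b :: c :: m) (by rw [h4]; rfl))


lemma inv_of_disc {F : Finset (Finset V)} {bd : List V} (h : ASC.IsDiscWithBoundary F bd) :
    Inv F bd := by
  induction h with
  | triangle a b c hab hac hbc => exact inv_triangle hab hac hbc
  | rotate F l₁ l₂ _ ih => exact inv_rotate l₁ l₂ ih
  | glue_vertex F a b d rest _ hd ih => exact inv_glue_vertex ih hd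
  | glue_edge F a b c rest _ hne hac hacF ih => exact inv_glue_edge ih hne hac hacF

lemma exists_snoc2 : ∀ (l : List V), 2 ≤ l.length → ∃ (l₀ : List V) (z y : V), l = l₀ ++ [z, y] := by
  intro l
  induction l with
  | nil => intro h; simp at h
  | cons a l ih =>
    intro h
    rcases l with _ | ⟨b, t⟩
    · simp at h
    · rcases t with _ | ⟨c, t'⟩
      · exact ⟨[], a, b, rfl⟩
      · obtain ⟨l₀, z, y, he⟩ := ih (by simp)
        exact ⟨a :: l₀, z, y, by rw [List.cons_append, ← he]⟩

lemma getLast?_append_pair (l : List V) (z y : V) : (l ++ [z, y]).getLast? = some y := by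
  have : l ++ [z, y] = (l ++ [z]) ++ [y] := by simp
  rw [this, List.getLast?_concat]

lemma head?_append_cons (l l' : List V) (z : V) : (l ++ z :: l').head? = (l ++ [z]).head? := by
  rcases l with _ | ⟨a, t⟩ <;> simp

lemma walk_of_chain (G : SimpleGraph V) :
    ∀ (l : List V) (x y : V), l.head? = some x → l.getLast? = some y → l.Chain' G.Adj →
      ∃ w : G.Walk x y, w.length + 1 = l.length := by
  intro l
  induction l with
  | nil => intro x y h _ _; simp at h
  | cons a l ih =>
    intro x y hx hy hch
    simp only [List.head?_cons, Option.some.injEq] at hx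
    subst hx
    rcases l with _ | ⟨b, t⟩
    · simp only [List.getLast?_singleton, Option.some.injEq] at hy
      subst hy
      exact ⟨SimpleGraph.Walk.nil, by simp⟩
    · have hadj : G.Adj a b := (List.isChain_cons_cons.1 hch).1
      obtain ⟨w, hw⟩ := ih b y rfl (by rwa [List.getLast?_cons_cons] at hy)
        (List.isChain_cons_cons.1 hch).2
      exact ⟨SimpleGraph.Walk.cons hadj w,
        by simp only [SimpleGraph.Walk.length_cons, List.length_cons] at hw ⊢; omega⟩

lemma range'_two (i : ℕ) : List.range' i 2 = [i, i + 1] := rfl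

lemma range'_three (i : ℕ) : List.range' i 3 = [i, i + 1, i + 1 + 1] := rfl

lemma range'_infix {i k n : ℕ} (h : i + k ≤ n) : List.range' i k <:+: List.range n := by
  refine ⟨List.range' 0 i, List.range' (i + k) (n - (i + k)), ?_⟩
  rw [List.range_eq_range', List.append_assoc]
  have h2 := List.range'_append (s := i) (m := k) (n := n - (i + k)) (step := 1)
  simp only [one_mul] at h2
  rw [h2]
  have h1 := List.range'_append (s := 0) (m := i) (n := k + (n - (i + k))) (step := 1)
  simp only [one_mul, zero_add] at h1
  rw [h1]
  congr 1
  omega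

lemma map_prefix_infix {α : ℕ → V} {bd : List V} {n : ℕ}
    (hpre : ((List.range (n + 1)).map α) <+: bd) {i k : ℕ} (h : i + k ≤ n + 1) :
    CPre bd ((List.range' i k).map α) :=
  cpre_infix (((range'_infix h).map α).trans hpre.isInfix)

lemma window2 {α : ℕ → V} {bd : List V} {n : ℕ}
    (hpre : ((List.range (n + 1)).map α) <+: bd) {i : ℕ} (h : i + 1 ≤ n) :
    CPre bd [α i, α (i + 1)] := by
  have := map_prefix_infix hpre (i := i) (k := 2) (by omega)
  rwa [range'_two] at this

lemma window3 {α : ℕ → V} {bd : List V} {n : ℕ}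
    (hpre : ((List.range (n + 1)).map α) <+: bd) {j : ℕ} (h1 : 1 ≤ j) (h2 : j + 1 ≤ n) :
    CPre bd [α (j - 1), α j, α (j + 1)] := by
  have := map_prefix_infix hpre (i := j - 1) (k := 3) (by omega)
  rw [range'_three] at this
  have e1 : j - 1 + 1 = j := by omega
  rwa [e1] at this

lemma tri_adj {F : Finset (Finset V)} {bd : List V} (inv : Inv F bd) {t : Finset V}
    (ht : IsTri F t) {x y : V} (hx : x ∈ t) (hy : y ∈ t) (hxy : x ≠ y) :
    (graphOf F).Adj x y :=
  graphOf_adj.2 ⟨hxy, inv.closed t ht x hx y hy hxy⟩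

lemma walk_along {F : Finset (Finset V)} {bd : List V} (inv : Inv F bd) (α : ℕ → V) (n : ℕ)
    (hpre : ((List.range (n + 1)).map α) <+: bd) :
    ∀ i j, i ≤ j → j ≤ n → ∃ w : (graphOf F).Walk (α i) (α j), w.length = j - i := by
  intro i j
  induction j with
  | zero =>
    intro hij _
    have : i = 0 := by omega
    subst this
    exact ⟨SimpleGraph.Walk.nil, rfl⟩
  | succ j ihj =>
    intro hij hjn
    rcases Nat.lt_or_ge i (j + 1) with hlt | hge
    · obtain ⟨w, hw⟩ := ihj (by omega) (by omega)
      have hadj : (graphOf F).Adj (α j) (α (j + 1)) :=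
        inv.adj _ _ (window2 hpre (by omega))
      exact ⟨w.concat hadj, by rw [SimpleGraph.Walk.length_concat, hw]; omega⟩
    · have : i = j + 1 := by omega
      subst this
      exact ⟨SimpleGraph.Walk.nil, by rw [SimpleGraph.Walk.length_nil]; omega⟩

lemma interior_angle {F : Finset (Finset V)} {bd : List V} (inv : Inv F bd) (α : ℕ → V) (n : ℕ)
    (hpre : ((List.range (n + 1)).map α) <+: bd)
    (hgeo : (graphOf F).dist (α 0) (α n) = n) :
    ∀ j, 0 < j → j < n → 2 ≤ angle F (α j) := by
  intro j h0 hn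
  obtain ⟨ws, hh, hlast, hlenw, hchain⟩ := inv.link _ _ _ (window3 hpre h0 (by omega))
  have hnodup : ((List.range (n + 1)).map α).Nodup := inv.nodup.sublist hpre.sublist
  have hinj := List.inj_on_of_nodup_map hnodup
  have hne : α (j - 1) ≠ α (j + 1) := by
    intro he
    have := hinj (List.mem_range.2 (show j - 1 < n + 1 by omega))
      (List.mem_range.2 (show j + 1 < n + 1 by omega)) he
    omega
  rcases ws with _ | ⟨w0, ws₁⟩
  · simp at hh
  rcases ws₁ with _ | ⟨w1, ws₂⟩
  · exfalso
    simp only [List.head?_cons, Option.some.injEq] at hh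
    simp only [List.getLast?_singleton, Option.some.injEq] at hlast
    exact hne (by rw [← hh, ← hlast])
  rcases ws₂ with _ | ⟨w2, ws₃⟩
  · -- angle = 1 : shortcut, contradiction with geodesic
    exfalso
    simp only [List.head?_cons, Option.some.injEq] at hh
    have hlast' : w1 = α (j + 1) := by
      simp only [List.getLast?_cons_cons, List.getLast?_singleton, Option.some.injEq] at hlast
      exact hlast
    have hstep : IsTri F {α j, w0, w1} := (List.isChain_cons_cons.1 hchain).1
    have hadj : (graphOf F).Adj (α (j - 1)) (α (j + 1)) := by
      rw [← hh, ← hlast']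
      exact tri_adj inv hstep (by simp) (by simp)
        (by rw [hh, hlast']; exact hne)
    obtain ⟨wA, hA⟩ := walk_along inv α n hpre 0 (j - 1) (by omega) (by omega)
    obtain ⟨wB, hB⟩ := walk_along inv α n hpre (j + 1) n (by omega) (le_refl n)
    have hdist := SimpleGraph.dist_le (wA.append (SimpleGraph.Walk.cons hadj wB))
    rw [hgeo] at hdist
    simp only [SimpleGraph.Walk.length_append, SimpleGraph.Walk.length_cons] at hdist
    omega
  · simp only [List.length_cons] at hlenw
    omega

lemma pushed {F : Finset (Finset V)} {bd : List V} (inv : Inv F bd) (α : ℕ → V) (n : ℕ)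
    (hpre : ((List.range (n + 1)).map α) <+: bd)
    (hang : ∀ i, 0 < i → i < n → 2 ≤ angle F (α i)) :
    ∀ m j, j + m = n → 1 ≤ j → ∀ y, IsTri F {y, α (j - 1), α j} →
      ∃ w : (graphOf F).Walk y (α n),
        (w.length : ℤ) ≤ 1 + ∑ i ∈ Finset.Ico j n, ((angle F (α i) : ℤ) - 2) := by
  intro m
  induction m with
  | zero =>
    intro j hjm _ y hy
    have hj : j = n := by omega
    subst hj
    have hne : y ≠ α j := ((tri_ne hy.2).2.1)
    have hadj : (graphOf F).Adj y (α j) := tri_adj inv hy (by simp) (by simp) hne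
    refine ⟨SimpleGraph.Walk.cons hadj SimpleGraph.Walk.nil, ?_⟩
    simp
  | succ m ih =>
    intro j hjm hj y hy
    have hjn : j < n := by omega
    obtain ⟨ws, hh, hlast, hlenw, hchain⟩ :=
      inv.link _ _ _ (window3 hpre hj (by omega))
    set k := angle F (α j) with hkdef
    have hk : 2 ≤ k := hang j hj hjn
    obtain ⟨l₀, z, q, rfl⟩ := exists_snoc2 ws (by omega)
    rcases l₀ with _ | ⟨w0, mid⟩
    · exfalso
      simp only [List.nil_append, List.length_cons, List.length_nil] at hlenw
      omega
    · have hw0 : w0 = α (j - 1) := by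
        simp only [List.cons_append, List.head?_cons, Option.some.injEq] at hh
        exact hh
      have hq : q = α (j + 1) := by
        rw [getLast?_append_pair] at hlast
        exact Option.some.inj hlast
      obtain ⟨u₁, hu₁⟩ : ∃ u, (mid ++ [z, q]).head? = some u := by
        rcases mid with _ | ⟨m0, mt⟩ <;> exact ⟨_, rfl⟩
      have hchain' : List.Chain' (fun x y => IsTri F {α j, x, y}) (w0 :: (mid ++ [z, q])) := by
        simpa only [List.cons_append] using hchain
      have hcc := List.isChain_cons.1 hchain'
      have hstep1 : IsTri F {α j, w0, u₁} := hcc.1 u₁ hu₁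
      rw [hw0] at hstep1
      have hchain2 : List.Chain' (fun x y => IsTri F {α j, x, y}) (mid ++ [z, q]) := hcc.2
      -- identify y = u₁
      have hcp2 : CPre bd [α (j - 1), α j] := by
        have h2 := window2 (i := j - 1) hpre (by omega)
        have e : j - 1 + 1 = j := by omega
        rwa [e] at h2
      have heq : ({y, α (j - 1), α j} : Finset V) = {α j, α (j - 1), u₁} := by
        refine inv.uniq (α (j - 1)) (α j) hcp2 _ _ hy
          hstep1 (by simp) (by simp) (by simp) (by simp)
      have hyne := tri_ne hy.2
      have hymem : y ∈ ({α j, α (j - 1), u₁} : Finset V) := heq ▸ (by simp)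
      have hyu : y = u₁ := by
        simp only [Finset.mem_insert, Finset.mem_singleton] at hymem
        rcases hymem with h | h | h
        · exact absurd h hyne.2.1
        · exact absurd h hyne.1
        · exact h
      -- walk from u₁ to z along mid ++ [z]
      have hpref : (mid ++ [z]) <+: (mid ++ [z, q]) := ⟨[q], by simp⟩
      have hchain3 : List.Chain' (fun x y => IsTri F {α j, x, y}) (mid ++ [z]) :=
        List.IsChain.prefix hchain2 hpref
      have hhead3 : (mid ++ [z]).head? = some u₁ := by
        rw [← head?_append_cons mid [q] z]
        exact hu₁
      have hchain4 : List.Chain' (graphOf F).Adj (mid ++ [z]) :=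
        List.IsChain.imp (fun x y h =>
          tri_adj inv h (by simp) (by simp) (tri_ne h.2).2.2) hchain3
      obtain ⟨w₁, hw₁⟩ := walk_of_chain (graphOf F) (mid ++ [z]) u₁ z hhead3
        List.getLast?_concat hchain4
      -- last step of the link
      have hzq : IsTri F {α j, z, q} := by
        have he : mid ++ [z, q] = (mid ++ [z]) ++ [q] := by simp
        rw [he] at hchain2
        exact (List.isChain_append.1 hchain2).2.2 z List.getLast?_concat q rfl
      -- recurse
      have hzq' : IsTri F {z, α (j + 1 - 1), α (j + 1)} := by
        have e : j + 1 - 1 = j := by omega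
        rw [e, ← triple_eq₁ z (α j) (α (j + 1)), ← hq]
        exact hzq
      obtain ⟨w₂, hw₂⟩ := ih (j + 1) (by omega) (by omega) z hzq'
      subst hyu
      refine ⟨w₁.append w₂, ?_⟩
      have hmidlen : mid.length = k - 2 := by
        simp only [List.cons_append, List.length_cons, List.length_append,
          List.length_nil] at hlenw
        omega
      have hlen1 : w₁.length = k - 2 := by
        simp only [List.length_append, List.length_cons, List.length_nil] at hw₁
        omega
      have hsum := Finset.sum_eq_sum_Ico_succ_bot hjn (fun i => ((angle F (α i) : ℤ) - 2))
      rw [SimpleGraph.Walk.length_append, hsum]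
      push_cast [hlen1]
      have hk' : ((k : ℤ) - 2) = ((k - 2 : ℕ) : ℤ) := by push_cast; omega
      rw [← hkdef]
      omega

end BGC


/-- For a geodesic `α` contained in the boundary of a triangulated 2-disc, the sum of the
boundary curvatures `3 − ∠(v)` over the interior vertices of `α` is at most `1`. -/
theorem boundary_geodesic_curvature {V : Type u} [DecidableEq V]
    (F : Finset (Finset V)) (bd : List V) (hD : ASC.IsDiscWithBoundary F bd)
    (α : ℕ → V) (n : ℕ) (hα : ((List.range (n + 1)).map α) <+: bd)
    (hgeo : (ASC.graphOf F).dist (α 0) (α n) = n) :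
    ∑ i ∈ Finset.Ioo 0 n, ((3 : ℤ) - ASC.angle F (α i)) ≤ 1 := by
  have inv := BGC.inv_of_disc hD
  rcases Nat.lt_or_ge n 2 with hn2 | hn2
  · have he : Finset.Ioo 0 n = ∅ := by
      interval_cases n <;> rfl
    rw [he, Finset.sum_empty]
    norm_num
  · have hang := BGC.interior_angle inv α n hα hgeo
    obtain ⟨ws, hh, hlast, hlenw, hchain⟩ :=
      inv.link (α 0) (α 1) (α 2) (by
        have := BGC.window3 (j := 1) hα (le_refl 1) (by omega)
        simpa using this)
    rcases ws with _ | ⟨w0, ws₁⟩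
    · simp at hh
    rcases ws₁ with _ | ⟨w1, ws₂⟩
    · exfalso
      simp only [List.length_cons, List.length_nil] at hlenw
      have := hang 1 (by omega) (by omega)
      omega
    · simp only [List.head?_cons, Option.some.injEq] at hh
      have h1 : BGC.IsTri F {α 1, w0, w1} := (List.isChain_cons_cons.1 hchain).1
      have htri : BGC.IsTri F {w1, α 0, α 1} := by
        rw [← BGC.triple_eq₄ w1 (α 0) (α 1)]
        rw [← hh]
        exact h1
      obtain ⟨w₂, hw₂⟩ := BGC.pushed inv α n hα hang (n - 1) 1 (by omega) (le_refl 1) w1 htri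
      have hne : α 0 ≠ w1 := by
        have := BGC.tri_ne htri.2
        exact fun h => this.1 h.symm
      have hadj : (ASC.graphOf F).Adj (α 0) w1 :=
        BGC.tri_adj inv htri (by simp) (by simp) hne
      have hdist := SimpleGraph.dist_le (SimpleGraph.Walk.cons hadj w₂)
      rw [hgeo] at hdist
      simp only [SimpleGraph.Walk.length_cons] at hdist
      have hIoo : Finset.Ioo 0 n = Finset.Ico 1 n := by
        ext i
        simp [Finset.mem_Ioo, Finset.mem_Ico]
        omega
      rw [hIoo]
      have hcast : ((n : ℤ)) ≤ 1 + (w₂.length : ℤ) := by omega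
      have hbound : (w₂.length : ℤ) ≤ 1 + ∑ i ∈ Finset.Ico 1 n, ((ASC.angle F (α i) : ℤ) - 2) :=
        hw₂
      have hsplit : ∑ i ∈ Finset.Ico 1 n, ((3 : ℤ) - ASC.angle F (α i)) =
          (Finset.Ico 1 n).card • (1 : ℤ) - ∑ i ∈ Finset.Ico 1 n, ((ASC.angle F (α i) : ℤ) - 2) := by
        rw [← Finset.sum_const, ← Finset.sum_sub_distrib]
        apply Finset.sum_congr rfl
        intro i _
        ring
      rw [hsplit, Nat.card_Ico, nsmul_eq_mul, mul_one]
      have hcard : ((n - 1 : ℕ) : ℤ) = (n : ℤ) - 1 := by push_cast [Nat.cast_sub]; omega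
      rw [hcard]
      linarith
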